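/- Suppose α is an irrational real number that is not a Liouville number. Then there exist a constant C > 0 and a positive integer N such that for all real x with |x| > 2π, |sin x| + |sin(α x)| ≥ C·(1+|x|)^(−(N−1)). -/

import Mathlib

open Real

/-- Nearest multiple of π and Jordan lower bound. -/
lemma sin_near_pi_mul (t : ℝ) :
    ∃ m : ℤ, |t - m * π| ≤ π / 2 ∧ |t - m * π| ≤ 2 * |Real.sin t| := by
  set m := round (t / π) with hm
  have hπ : (0:ℝ) < π := Real.pi_pos
  have h : |t / π - m| ≤ 1 / 2 := abs_sub_round (t / π)
  have h1 : |t - m * π| ≤ π / 2 := by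
    have key : t - m * π = (t / π - m) * π := by field_simp
    rw [key, abs_mul, abs_of_pos hπ]
    nlinarith
  refine ⟨m, h1, ?_⟩
  have h2 : 2 / π * |t - m * π| ≤ |Real.sin (t - m * π)| :=
    Real.mul_abs_le_abs_sin h1
  have h3 : |Real.sin (t - m * π)| = |Real.sin t| := by
    rw [Real.sin_sub_int_mul_pi, abs_mul]
    rcases Int.even_or_odd m with he | ho
    · rw [he.neg_one_zpow, abs_one, one_mul]
    · rw [ho.neg_one_zpow, abs_neg, abs_one, one_mul]
  rw [h3] at h2
  have hπ4 : π ≤ 4 := by nlinarith [Real.pi_le_four]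
  have : (1:ℝ) / 2 * |t - m * π| ≤ 2 / π * |t - m * π| := by
    apply mul_le_mul_of_nonneg_right _ (abs_nonneg _)
    rw [div_le_div_iff₀ (by norm_num) hπ]
    linarith
  linarith

set_option maxHeartbeats 1000000 in
theorem stmt7 {α : ℝ} (hirr : Irrational α) (hL : ¬ Liouville α) :
    ∃ C : ℝ, 0 < C ∧ ∃ N : ℕ, 0 < N ∧ ∀ x : ℝ, |x| > 2 * Real.pi →
      |Real.sin x| + |Real.sin (α * x)| ≥ C * (1 + |x|) ^ (-((N : ℤ) - 1)) := by
  -- extract the diophantine bound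
  rw [Liouville] at hL
  push_neg at hL
  obtain ⟨N₀, hN₀⟩ := hL
  set N := N₀ + 1 with hN
  have hdio : ∀ p q : ℤ, 1 < q → (1:ℝ) / q ^ N ≤ |α - p / q| := by
    intro p q hq
    have hq1 : (1:ℝ) < q := by exact_mod_cast hq
    have hne : α ≠ (p:ℝ) / q := (irrational_iff_ne_rational α).mp hirr p q (by omega)
    have h := hN₀ p q hq hne
    calc (1:ℝ) / q ^ N ≤ 1 / q ^ N₀ := by
          apply div_le_div_of_nonneg_left one_pos.le (by positivity)
          exact pow_le_pow_right₀ (by linarith) (by omega)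
      _ ≤ |α - p / q| := h
  set M := max |α| 1 with hM
  have hM1 : (1:ℝ) ≤ M := le_max_right _ _
  have hMα : |α| ≤ M := le_max_left _ _
  refine ⟨π / (2 * M), by positivity, N, by omega, ?_⟩
  intro x hx
  have hπ : (0:ℝ) < π := Real.pi_pos
  obtain ⟨m, hm1, hm2⟩ := sin_near_pi_mul x
  obtain ⟨n, hn1, hn2⟩ := sin_near_pi_mul (α * x)
  -- |m| ≥ 2
  have hmabs : 2 ≤ |m| := by
    by_contra h
    push_neg at h
    have hm1' : |(m:ℝ)| ≤ 1 := by
      have : |m| ≤ 1 := by omega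
      calc |(m:ℝ)| = ((|m| : ℤ) : ℝ) := by push_cast; ring
        _ ≤ 1 := by exact_mod_cast this
    have : |x| - |(m:ℝ) * π| ≤ |x - m * π| := abs_sub_abs_le_abs_sub _ _
    rw [abs_mul, abs_of_pos hπ] at this
    nlinarith
  set D := |(m:ℝ)| with hDdef
  have hD2 : (2:ℝ) ≤ D := by
    rw [hDdef, ← Int.cast_abs]; exact_mod_cast hmabs
  have hDpos : (0:ℝ) < D := by linarith
  have hmne : (m:ℝ) ≠ 0 := by
    intro h0; rw [hDdef, h0, abs_zero] at hD2; linarith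
  -- diophantine bound
  have hd : 1 / D ^ N ≤ |α - (n:ℝ) / m| := by
    rcases le_or_gt m 0 with hm0 | hm0
    · have hmneg : m < 0 := by rcases hm0.lt_or_eq with h | h; exact h; simp [h] at hmabs
      have h := hdio (-n) (-m) (by rw [abs_of_neg hmneg] at hmabs; omega)
      push_cast at h
      rw [neg_div_neg_eq] at h
      have e1 : -(m:ℝ) = D := by
        rw [hDdef, abs_of_neg (show (m:ℝ) < 0 by exact_mod_cast hmneg)]
      rwa [e1] at h
    · have h := hdio n m (by rw [abs_of_pos hm0] at hmabs; omega)
      have e1 : ((m:ℤ):ℝ) ^ N = D ^ N := by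
        rw [hDdef, abs_of_pos (show (0:ℝ) < m by exact_mod_cast hm0)]
      rwa [e1] at h
  have key : |α * m - n| = D * |α - (n:ℝ)/m| := by
    rw [hDdef, ← abs_mul]
    congr 1
    field_simp
  have h4 : D / D ^ N ≤ |α * (m:ℝ) - n| := by
    rw [key]
    calc D / D ^ N = D * (1 / D ^ N) := by ring
      _ ≤ D * |α - (n:ℝ)/m| := mul_le_mul_of_nonneg_left hd hDpos.le
  have h5 : π * |α * (m:ℝ) - n| ≤ M * (|x - m * π| + |α * x - n * π|) := by
    have e : α * (m:ℝ) * π - n * π = α * ((m:ℝ) * π - x) + (α * x - n * π) := by ring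
    have htri : |α * (m:ℝ) * π - n * π| ≤ |α| * |x - m * π| + |α * x - n * π| := by
      rw [e]
      refine (abs_add_le _ _).trans ?_
      rw [abs_mul, abs_sub_comm x ((m:ℝ) * π)]
    have e2 : |α * (m:ℝ) * π - (n:ℝ) * π| = π * |α * (m:ℝ) - n| := by
      rw [show α * (m:ℝ) * π - (n:ℝ) * π = (α * m - n) * π by ring, abs_mul,
        abs_of_pos hπ, mul_comm]
    rw [← e2]
    have h1 := abs_nonneg (x - (m:ℝ) * π)
    have h2 := abs_nonneg (α * x - (n:ℝ) * π)
    nlinarith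
  set S := |Real.sin x| + |Real.sin (α * x)| with hS
  have hSd : |x - (m:ℝ) * π| + |α * x - (n:ℝ) * π| ≤ 2 * S := by
    rw [hS]; linarith
  have hSnn : 0 ≤ S := by positivity
  set k := N₀ with hk
  have hNk : N = k + 1 := rfl
  have hDk : D / D ^ N = 1 / D ^ k := by
    rw [hNk, pow_succ]
    field_simp
  set B := D ^ k with hB
  have hBpos : (0:ℝ) < B := by positivity
  have h6 : π * (1 / B) ≤ 2 * M * S := by
    calc π * (1 / B) = π * (D / D ^ N) := by rw [hDk]
      _ ≤ π * |α * (m:ℝ) - n| := mul_le_mul_of_nonneg_left h4 hπ.le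
      _ ≤ M * (|x - m * π| + |α * x - n * π|) := h5
      _ ≤ M * (2 * S) := mul_le_mul_of_nonneg_left hSd (by linarith)
      _ = 2 * M * S := by ring
  -- D ≤ 1 + |x|
  have hD1x : D ≤ 1 + |x| := by
    have h7 : D * π - |x| ≤ |x - (m:ℝ) * π| := by
      have := abs_sub_abs_le_abs_sub ((m:ℝ) * π) x
      rw [abs_mul, abs_of_pos hπ, abs_sub_comm] at this
      linarith
    have hπ3 : (3:ℝ) ≤ π := by nlinarith [Real.pi_gt_three]
    nlinarith [abs_nonneg x]
  set A := (1 + |x|) ^ k with hA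
  have hApos : (0:ℝ) < A := by positivity
  have hBA : B ≤ A := pow_le_pow_left₀ hDpos.le hD1x k
  have hzp : (1 + |x|) ^ (-((N:ℤ) - 1)) = A⁻¹ := by
    have e : -((N:ℤ) - 1) = -(k:ℤ) := by rw [hNk]; push_cast; ring
    rw [e, zpow_neg, zpow_natCast]
  rw [hzp, ge_iff_le]
  have hMpos : (0:ℝ) < M := by linarith
  have step1 : π / (2 * M) * A⁻¹ = π / (2 * M * A) := by
    field_simp
  rw [step1]
  have step2 : π / (2 * M * A) ≤ π / (2 * M * B) := by
    gcongr
  refine step2.trans ?_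
  rw [div_le_iff₀ (by positivity)]
  calc π = π * (1 / B) * B := by field_simp
    _ ≤ 2 * M * S * B := mul_le_mul_of_nonneg_right h6 hBpos.le
    _ = S * (2 * M * B) := by ring
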